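/- Let m be a positive integer divisible by 4. Then there are infinitely many positive integers N that cannot be written as N = p_{m+4}(x₁) + p_{m+4}(x₂) + p_{m+4}(x₃) + p_{m+4}(x₄) with x₁, x₂, x₃, x₄ nonnegative integers. -/

import Mathlib

/-- Polygonal number of order `m+4`: `p_{m+4}(n) = ((m+2)·n² − m·n)/2 = (m+2)·n(n−1)/2 + n`. -/
def polygonalM4 (m n : ℕ) : ℕ := (m + 2) * (n * (n - 1)) / 2 + n

lemma poly_eq (k x : ℕ) : polygonalM4 (4*k) x = (2*k+1) * (x*(x-1)) + x := by
  unfold polygonalM4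
  have h : 4*k+2 = 2*(2*k+1) := by ring
  rw [h, mul_assoc, Nat.mul_div_cancel_left _ (by norm_num : 0 < 2)]

lemma key_id (k x : ℕ) :
    ((2*k+1) * x - k : ℤ)^2 = (2*k+1) * (polygonalM4 (4*k) x : ℤ) + k^2 := by
  rcases x with _ | y
  · have h0 : polygonalM4 (4*k) 0 = 0 := by simp [polygonalM4]
    rw [h0]; push_cast; ring
  · rw [poly_eq]
    push_cast [Nat.succ_sub_one]
    ring

lemma zne (k x : ℕ) (hk : 0 < k) : ((2*k+1) * x - k : ℤ) ≠ 0 := by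
  rcases x with _ | y
  · simp only [Nat.cast_zero, mul_zero, zero_sub, ne_eq, neg_eq_zero, Nat.cast_eq_zero]
    omega
  · have h0 : (0:ℤ) ≤ (2*k+1) * (y:ℤ) := by positivity
    push_cast
    intro hcon
    have hexp : (2*(k:ℤ)+1) * ((y:ℤ)+1) = (2*k+1)*y + 2*k+1 := by ring
    rw [hexp] at hcon
    have : (0:ℤ) < k := by exact_mod_cast hk
    linarith

/-- parity trichotomy for squares mod 8 -/
lemma par (z : ℤ) : (Even z ∧ ∃ v, z^2 = 8*v) ∨ (Even z ∧ ∃ v, z^2 = 8*v+4)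
    ∨ (∃ v, z^2 = 8*v+1) := by
  obtain ⟨w, hw⟩ := Int.even_or_odd' z
  rcases hw with rfl | rfl
  · obtain ⟨u, hu⟩ := Int.even_or_odd' w
    rcases hu with rfl | rfl
    · exact Or.inl ⟨⟨2*u, by ring⟩, 2*u^2, by ring⟩
    · exact Or.inr (Or.inl ⟨⟨2*u+1, by ring⟩, 2*u^2+2*u, by ring⟩)
  · refine Or.inr (Or.inr ?_)
    obtain ⟨v, hv⟩ := Int.even_mul_succ_self w
    exact ⟨v, by linear_combination 4 * hv⟩

lemma descent (r : ℕ) : ∀ a b c e : ℤ, a ≠ 0 → b ≠ 0 → c ≠ 0 → e ≠ 0 →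
    a^2+b^2+c^2+e^2 = 2^r → ∃ s, r = 2*s+2 ∧ (a = 2^s ∨ a = -2^s) := by
  induction r using Nat.strong_induction_on with
  | _ r IH =>
  intro a b c e ha hb hc he hsum
  have pa : (1:ℤ) ≤ a^2 :=
    Int.lt_iff_add_one_le.mp (lt_of_le_of_ne (sq_nonneg a) (Ne.symm (pow_ne_zero 2 ha)))
  have pb : (1:ℤ) ≤ b^2 :=
    Int.lt_iff_add_one_le.mp (lt_of_le_of_ne (sq_nonneg b) (Ne.symm (pow_ne_zero 2 hb)))
  have pc : (1:ℤ) ≤ c^2 :=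
    Int.lt_iff_add_one_le.mp (lt_of_le_of_ne (sq_nonneg c) (Ne.symm (pow_ne_zero 2 hc)))
  have pe : (1:ℤ) ≤ e^2 :=
    Int.lt_iff_add_one_le.mp (lt_of_le_of_ne (sq_nonneg e) (Ne.symm (pow_ne_zero 2 he)))
  rcases lt_or_ge r 3 with hr | hr
  · interval_cases r
    · norm_num at hsum; linarith
    · norm_num at hsum; linarith
    · refine ⟨0, rfl, ?_⟩
      have ha2 : a^2 = 1 := by norm_num at hsum; linarith
      have h0 : (a-1)*(a+1) = 0 := by linear_combination ha2
      rcases mul_eq_zero.mp h0 with h | h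
      · left; norm_num; linarith
      · right; norm_num; linarith
  · obtain ⟨r', rfl⟩ : ∃ r', r = r' + 3 := ⟨r - 3, by omega⟩
    have hev : Even a ∧ Even b ∧ Even c ∧ Even e := by
      have hs := hsum
      obtain ⟨T, hT⟩ : ∃ T : ℤ, (2:ℤ)^(r'+3) = 8*T := ⟨2^r', by ring⟩
      rw [hT] at hs
      rcases par a with ⟨ea,va,hva⟩|⟨ea,va,hva⟩|⟨va,hva⟩ <;>
        rcases par b with ⟨eb,vb,hvb⟩|⟨eb,vb,hvb⟩|⟨vb,hvb⟩ <;>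
        rcases par c with ⟨ec,vc,hvc⟩|⟨ec,vc,hvc⟩|⟨vc,hvc⟩ <;>
        rcases par e with ⟨ee,ve,hve⟩|⟨ee,ve,hve⟩|⟨ve,hve⟩ <;>
        rw [hva,hvb,hvc,hve] at hs <;>
        first
          | exact ⟨ea,eb,ec,ee⟩
          | (exfalso; omega)
    obtain ⟨⟨a', rfl⟩, ⟨b', rfl⟩, ⟨c', rfl⟩, ⟨e', rfl⟩⟩ := hev
    have ha' : a' ≠ 0 := fun h => ha (by simp [h])
    have hb' : b' ≠ 0 := fun h => hb (by simp [h])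
    have hc' : c' ≠ 0 := fun h => hc (by simp [h])
    have he' : e' ≠ 0 := fun h => he (by simp [h])
    have h4 : (4:ℤ) * (a'^2+b'^2+c'^2+e'^2) = 4 * 2^(r'+1) := by
      linear_combination hsum
    have hs' : a'^2+b'^2+c'^2+e'^2 = 2^(r'+1) :=
      mul_left_cancel₀ (by norm_num) h4
    obtain ⟨s, hs1, hs2⟩ := IH (r'+1) (by omega) a' b' c' e' ha' hb' hc' he' hs'
    refine ⟨s+1, by omega, ?_⟩
    rcases hs2 with rfl | rfl
    · left; ring
    · right; ring

theorem infinitely_many_not_sum_four_polygonal (m : ℕ) (hm : 0 < m) (h4 : 4 ∣ m) :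
    {N : ℕ | 0 < N ∧ ¬ ∃ x₁ x₂ x₃ x₄ : ℕ,
      N = polygonalM4 m x₁ + polygonalM4 m x₂ + polygonalM4 m x₃ + polygonalM4 m x₄}.Infinite := by
  obtain ⟨k, rfl⟩ := h4
  have hk : 0 < k := by omega
  set q : ℕ := 2*k+1 with hq
  haveI : NeZero q := ⟨by omega⟩
  have hcop : Nat.Coprime 2 q := Nat.coprime_two_left.mpr ⟨k, by omega⟩
  set u : (ZMod q)ˣ := ZMod.unitOfCoprime 2 hcop with hu
  set d : ℕ := orderOf u with hd
  have hd0 : 0 < d := orderOf_pos u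
  have hud : u ^ d = 1 := by rw [hd]; exact pow_orderOf_eq_one u
  have hd1 : d ≠ 1 := by
    intro h1
    have h1' : orderOf u = 1 := by rw [← hd]; exact h1
    have hu1 : u = 1 := orderOf_eq_one_iff.mp h1'
    have h2 : ((2:ℕ) : ZMod q) = 1 := by
      rw [← ZMod.coe_unitOfCoprime 2 hcop, ← hu, hu1, Units.val_one]
    have h3 : ((1:ℕ) : ZMod q) = 0 := by
      push_cast at h2 ⊢
      linear_combination h2
    have h5 := Nat.dvd_one.mp ((ZMod.natCast_eq_zero_iff 1 q).mp h3)
    omega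
  have hd2 : 2 ≤ d := by omega
  set rr : ℕ → ℕ := fun j => d * (2*(j+k+1)+1) with hrr
  have hrrj : ∀ j, rr j = d * (2*(j+k+1)+1) := fun j => rfl
  have hpow1 : ∀ j, ((2:ZMod q))^(rr j) = 1 := by
    intro j
    have h1 : u ^ (rr j) = 1 := by
      rw [hrrj j, pow_mul, hud, one_pow]
    have h2 : ((u : ZMod q))^(rr j) = 1 := by
      rw [← Units.val_pow_eq_pow_val, h1, Units.val_one]
    rw [ZMod.coe_unitOfCoprime 2 hcop] at h2
    exact_mod_cast h2
  have hrge : ∀ j, 4*k + 6 ≤ rr j :=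
    fun j => calc 4*k+6 ≤ 2*(2*(j+k+1)+1) := by omega
      _ ≤ d * (2*(j+k+1)+1) := Nat.mul_le_mul_right _ hd2
      _ = rr j := (hrrj j).symm
  have hlt : ∀ j, 4*k^2 < 2^(rr j) := by
    intro j
    have h1 : k < 2^k := Nat.lt_two_pow_self (n := k)
    have h2 : k^2 < (2^k)^2 := Nat.pow_lt_pow_left h1 (by norm_num)
    have h3 : 4 * k^2 < 4 * (2^k)^2 := by omega
    have h4 : 4 * (2^k)^2 = 2^(2*k+2) := by rw [← pow_mul]; ring
    calc 4*k^2 < 2^(2*k+2) := by rw [← h4]; exact h3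
      _ ≤ 2^(rr j) := Nat.pow_le_pow_right (by norm_num) (by have := hrge j; omega)
  have hdvd : ∀ j, q ∣ 2^(rr j) - 4*k^2 := by
    intro j
    have h1 : q ∣ 2^(rr j) - 1 := by
      have hc : (((2^(rr j) - 1 : ℕ)) : ZMod q) = 0 := by
        have h2 : (1:ℕ) ≤ 2^(rr j) := Nat.one_le_two_pow
        push_cast [Nat.cast_sub h2]
        rw [hpow1 j]; ring
      exact (ZMod.natCast_eq_zero_iff _ q).mp hc
    have h2 : q ∣ 4*k^2 - 1 := by
      refine ⟨2*k - 1, ?_⟩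
      rw [hq]
      obtain ⟨n, rfl⟩ : ∃ n, k = n+1 := ⟨k-1, by omega⟩
      rw [show 2*(n+1) - 1 = 2*n+1 from by omega,
        show 4*(n+1)^2 = 4*n^2+8*n+4 from by ring,
        show (2*(n+1)+1) * (2*n+1) = 4*n^2+8*n+3 from by ring]
      omega
    have h3 := Nat.dvd_sub h1 h2
    have hy : 1 ≤ 4*k^2 := by have := pow_pos hk 2; omega
    have h4 : ∀ X Y : ℕ, 1 ≤ Y → Y < X → X - 1 - (Y - 1) = X - Y := by
      intro X Y h1 h
      omega
    rwa [h4 _ _ hy (hlt j)] at h3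
  set f : ℕ → ℕ := fun j => (2^(rr j) - 4*k^2) / q with hf
  have hfq : ∀ j, q * f j + 4*k^2 = 2^(rr j) := by
    intro j
    have h1 : q * f j = 2^(rr j) - 4*k^2 := Nat.mul_div_cancel' (hdvd j)
    have h2 := hlt j
    omega
  have hinj : Function.Injective f := by
    intro i j hij
    have h1 : 2^(rr i) = 2^(rr j) := by
      rw [← hfq i, ← hfq j, hij]
    have h2 : rr i = rr j := Nat.pow_right_injective (by norm_num) h1
    rw [hrrj i, hrrj j] at h2
    have h3 := Nat.eq_of_mul_eq_mul_left hd0 h2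
    omega
  apply Set.infinite_of_injective_forall_mem hinj
  intro j
  constructor
  · -- positivity of f j
    have h1 := hfq j
    have h2 := hlt j
    rcases Nat.eq_zero_or_pos (f j) with h0 | h0
    · rw [h0, Nat.mul_zero, Nat.zero_add] at h1
      exact absurd h1 (Nat.ne_of_lt h2)
    · exact h0
  · -- non-representability
    rintro ⟨x₁, x₂, x₃, x₄, hN⟩
    have hsum : ((2*k+1) * x₁ - k : ℤ)^2 + ((2*k+1) * x₂ - k : ℤ)^2
        + ((2*k+1) * x₃ - k : ℤ)^2 + ((2*k+1) * x₄ - k : ℤ)^2 = 2^(rr j) := by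
      rw [key_id, key_id, key_id, key_id]
      have hfqz : ((q:ℤ)) * (f j) + 4*(k:ℤ)^2 = 2^(rr j) := by exact_mod_cast hfq j
      have hNz : ((f j : ℤ)) = (polygonalM4 (4*k) x₁ : ℤ) + (polygonalM4 (4*k) x₂ : ℤ)
          + (polygonalM4 (4*k) x₃ : ℤ) + (polygonalM4 (4*k) x₄ : ℤ) := by exact_mod_cast hN
      have hqz : (q:ℤ) = 2*(k:ℤ)+1 := by rw [hq]; push_cast; ring
      rw [hNz, hqz] at hfqz
      linear_combination hfqz
    obtain ⟨s, hs1, hs2⟩ := descent (rr j) _ _ _ _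
      (zne k x₁ hk) (zne k x₂ hk) (zne k x₃ hk) (zne k x₄ hk) hsum
    have hks : k < 2^s := by
      have h1 := hrge j
      have h2 : k ≤ s := by omega
      exact lt_of_le_of_lt h2 (Nat.lt_two_pow_self (n := s))
    rcases hs2 with hpos | hneg
    · -- congruence contradiction
      have hnat : (2*k+1) * x₁ = 2^s + k := by
        have hz : ((2*k+1) * x₁ : ℤ) = 2^s + k := by linarith [hpos]
        exact_mod_cast hz
      have hq0 : 2*((k:ℕ) : ZMod q)+1 = 0 := by
        have h0 := ZMod.natCast_self q
        rw [hq] at h0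
        push_cast at h0
        linear_combination h0
      have hcast := congrArg (Nat.cast : ℕ → ZMod q) hnat
      push_cast at hcast
      have hzm : ((2:ZMod q))^s + ((k:ℕ) : ZMod q) = 0 := by
        linear_combination ((x₁:ℕ) : ZMod q) * hq0 - hcast
      have hs1' : ((2:ZMod q))^(s+1) = 1 := by
        rw [pow_succ]
        linear_combination 2*hzm - hq0
      have hu1 : u^(s+1) = 1 := by
        apply Units.ext
        rw [Units.val_pow_eq_pow_val, ZMod.coe_unitOfCoprime 2 hcop, Units.val_one]
        exact_mod_cast hs1'
      have hdd : d ∣ s + 1 := by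
        rw [hd]
        exact orderOf_dvd_of_pow_eq_one hu1
      obtain ⟨e, he⟩ := hdd
      have hP : d * (2*(j+k+1)+1) = d * (2*e) := by
        have hA := hrrj j
        have hB : d*(2*e) = 2*(d*e) := by ring
        omega
      have := Nat.eq_of_mul_eq_mul_left hd0 hP
      omega
    · -- size contradiction
      have h0 : (0:ℤ) ≤ (2*(k:ℤ)+1) * (x₁:ℤ) := by positivity
      have hks' : ((k:ℤ)) < 2^s := by exact_mod_cast hks
      linarith [hneg]
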